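/- Let n, m be coprime positive integers with m ≥ n ≥ 1. Define sequences b and a by b_1 = n, a_r = ⌊(m - b_r)/n⌋, and b_{r+1} = n a_r + b_r - (m - n). Then for all 1 ≤ r ≤ n we have 0 < b_r ≤ n and m - n < n a_r + b_r ≤ m; moreover Σ_{r=1}^{n} a_r = m - n and b_{n+1} = n. -/

import Mathlib

open Finset

/-- Let `n, m` be coprime positive integers with `m ≥ n ≥ 1`.  Define sequences `b`
and `a` by `b 1 = n`, `a r = ⌊(m - b r)/n⌋` (floor division) and
`b (r+1) = n * a r + b r - (m - n)`.  Then for all `1 ≤ r ≤ n` we have `0 < b r ≤ n`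
and `m - n < n * a r + b r ≤ m`; moreover `Σ_{r=1}^{n} a r = m - n` and
`b (n+1) = n`. -/
theorem downup_floor_sequences (n m : ℕ) (hc : Nat.Coprime n m)
    (hn : 1 ≤ n) (hnm : n ≤ m)
    (a b : ℕ → ℤ) (hb1 : b 1 = n)
    (ha : ∀ r : ℕ, a r = Int.fdiv ((m : ℤ) - b r) (n : ℤ))
    (hb : ∀ r : ℕ, b (r + 1) = (n : ℤ) * a r + b r - ((m : ℤ) - n)) :
    (∀ r : ℕ, 1 ≤ r → r ≤ n →
        0 < b r ∧ b r ≤ (n : ℤ) ∧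
        (m : ℤ) - n < (n : ℤ) * a r + b r ∧ (n : ℤ) * a r + b r ≤ (m : ℤ)) ∧
      (∑ r ∈ Icc 1 n, a r = (m : ℤ) - n) ∧ b (n + 1) = n := by
  have hn' : (0 : ℤ) < n := by exact_mod_cast hn
  have key : ∀ r, (n : ℤ) * a r + b r = (m : ℤ) - ((m : ℤ) - b r) % n := by
    intro r
    rw [ha r, Int.fdiv_eq_ediv_of_nonneg _ (le_of_lt hn')]
    have := Int.mul_ediv_add_emod ((m : ℤ) - b r) n
    linarith
  have hmod : ∀ r, 0 ≤ ((m : ℤ) - b r) % n ∧ ((m : ℤ) - b r) % n < n := fun r =>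
    ⟨Int.emod_nonneg _ (ne_of_gt hn'), Int.emod_lt_of_pos _ hn'⟩
  have hbr : ∀ r, b (r + 1) = (n : ℤ) - ((m : ℤ) - b r) % n := by
    intro r; rw [hb r]; linarith [key r]
  have inv : ∀ r, 1 ≤ r → 0 < b r ∧ b r ≤ n := by
    intro r hr
    rcases Nat.exists_eq_add_of_le hr with ⟨k, rfl⟩
    rcases k with _ | k
    · simp [hb1, hn', le_refl]; omega
    · have h := hbr (1 + k)
      have hm := hmod (1 + k)
      constructor <;> [skip; skip] <;>
        · rw [show 1 + (k + 1) = (1 + k) + 1 by ring, h]; linarith [hm.1, hm.2]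
  -- divisibility: n ∣ b (k+1) + k * m - b 1
  have dvd : ∀ k : ℕ, (n : ℤ) ∣ b (k + 1) + k * m - b 1 := by
    intro k
    induction k with
    | zero => simp
    | succ j ih =>
      have h2 : b (j + 1 + 1) + (j + 1 : ℕ) * m - b 1 =
          (b (j + 1) + j * m - b 1) + ((n : ℤ) * a (j + 1) + n) := by
        rw [hb (j + 1)]; push_cast; ring
      rw [h2]
      exact dvd_add ih ⟨a (j + 1) + 1, by ring⟩
  have hbn1 : b (n + 1) = n := by
    have hd : (n : ℤ) ∣ b (n + 1) := by
      have := dvd n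
      rw [hb1] at this
      have h2 : (n : ℤ) ∣ (n : ℤ) * m - n := ⟨(m : ℤ) - 1, by ring⟩
      have h3 := dvd_sub this h2
      have h4 : b (n + 1) + (n : ℤ) * m - n - ((n : ℤ) * m - n) = b (n + 1) := by ring
      rwa [h4] at h3
    have h1 := inv (n + 1) (by omega)
    have hle : (n : ℤ) ≤ b (n + 1) := Int.le_of_dvd h1.1 hd
    linarith [h1.2]
  -- telescoping sum
  have tsum : ∀ N : ℕ, (n : ℤ) * ∑ r ∈ Icc 1 N, a r = b (N + 1) - b 1 + N * ((m : ℤ) - n) := by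
    intro N
    induction N with
    | zero => simp
    | succ j ih =>
      rw [Finset.sum_Icc_succ_top (by omega), mul_add, ih, hb (j + 1)]
      push_cast; ring
  refine ⟨fun r h1 hr => ?_, ?_, hbn1⟩
  · obtain ⟨hb0, hbn⟩ := inv r h1
    have hk := key r
    have hm := hmod r
    exact ⟨hb0, hbn, by linarith [hm.2], by linarith [hm.1]⟩
  · have := tsum n
    rw [hbn1, hb1] at this
    have h2 : (n : ℤ) * ∑ r ∈ Icc 1 n, a r = n * ((m : ℤ) - n) := by linarith
    exact mul_left_cancel₀ (ne_of_gt hn') h2
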